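/- Let p ∈ (0,1), Ā > 0, φ > 0, and c ∈ [p²φ/(2Ā), φ/(2Ā)). Set s = sqrt(2cĀ/φ), so s ∈ [p, 1). Then y = (2cĀ/φ)/(2s − p) satisfies the equation y·(sqrt(y − p) + sqrt(y))² = 2cĀ/φ, and moreover y ∈ [p, 1]. -/

import Mathlib

/-- For c ∈ [p²φ/(2Ā), φ/(2Ā)), with s = √(2cĀ/φ) ∈ [p,1),
the value y = (2cĀ/φ)/(2s − p) solves y(√(y−p)+√y)² = 2cĀ/φ and y ∈ [p,1]. -/
theorem stmt_3 (p A φ c : ℝ) (hp : p ∈ Set.Ioo (0 : ℝ) 1) (hA : 0 < A) (hφ : 0 < φ)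
    (hcl : p ^ 2 * φ / (2 * A) ≤ c) (hcu : c < φ / (2 * A)) :
    Real.sqrt (2 * c * A / φ) ∈ Set.Ico p 1 ∧
    (let s := Real.sqrt (2 * c * A / φ)
     let y := (2 * c * A / φ) / (2 * s - p)
     y * (Real.sqrt (y - p) + Real.sqrt y) ^ 2 = 2 * c * A / φ ∧ y ∈ Set.Icc p 1) := by
  obtain ⟨hp0, hp1⟩ := hp
  set T := 2 * c * A / φ with hT
  have hTp : p ^ 2 ≤ T := by
    rw [div_le_iff₀ (by positivity)] at hcl
    rw [hT, le_div_iff₀ hφ]; nlinarith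
  have hT1 : T < 1 := by
    rw [lt_div_iff₀ (by positivity)] at hcu
    rw [hT, div_lt_one hφ]; nlinarith
  have hTpos : 0 < T := lt_of_lt_of_le (by positivity) hTp
  set s := Real.sqrt T with hs
  have hsp : p ≤ s := by
    have := Real.sqrt_le_sqrt hTp
    rwa [Real.sqrt_sq hp0.le] at this
  have hs1 : s < 1 := by
    have : s < Real.sqrt 1 := Real.sqrt_lt_sqrt hTpos.le hT1
    simpa using this
  have hs0 : 0 < s := lt_of_lt_of_le hp0 hsp
  have hssq : s ^ 2 = T := Real.sq_sqrt hTpos.le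
  have hd : 0 < 2 * s - p := by linarith
  have hd' : 0 < Real.sqrt (2 * s - p) := Real.sqrt_pos.mpr hd
  refine ⟨⟨hsp, hs1⟩, ?_⟩
  show T / (2 * s - p) * (Real.sqrt (T / (2 * s - p) - p) +
      Real.sqrt (T / (2 * s - p))) ^ 2 = T ∧ T / (2 * s - p) ∈ Set.Icc p 1
  have e1 : Real.sqrt (T / (2 * s - p) - p) = (s - p) / Real.sqrt (2 * s - p) := by
    have h : T / (2 * s - p) - p = (s - p) ^ 2 / (2 * s - p) := by
      rw [← hssq, eq_div_iff hd.ne', sub_mul, div_mul_cancel₀ _ hd.ne']; ring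
    rw [h, Real.sqrt_div (by positivity), Real.sqrt_sq (by linarith)]
  have e2 : Real.sqrt (T / (2 * s - p)) = s / Real.sqrt (2 * s - p) := by
    rw [← hssq, Real.sqrt_div (by positivity), Real.sqrt_sq hs0.le]
  refine ⟨?_, ?_, ?_⟩
  · rw [e1, e2, ← add_div]
    have h2 : (s - p + s) / Real.sqrt (2 * s - p) = Real.sqrt (2 * s - p) := by
      rw [show s - p + s = 2 * s - p by ring, Real.div_sqrt]
    rw [h2, Real.sq_sqrt hd.le, div_mul_cancel₀ _ hd.ne']
  · rw [le_div_iff₀ hd, ← hssq]; nlinarith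
  · rw [div_le_one hd, ← hssq]
    nlinarith [mul_pos hs0 (sub_pos.mpr hs1)]
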